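/- Let Λ > 0 and let x : ℝ → ℝ be differentiable with ẋ(t) = −x(t)² + Λ/3 for all t, and suppose |x(0)| < √(Λ/3). Then x(t) → √(Λ/3) as t → +∞ and x(t) → −√(Λ/3) as t → −∞; i.e. the interval (−√(Λ/3), √(Λ/3)) lies in the stable manifold of the expanding de Sitter equilibrium √(Λ/3) and in the unstable manifold of the contracting de Sitter equilibrium −√(Λ/3). -/

import Mathlib

open Filter Topology

/-- For `Λ > 0`, any solution of `ẋ = −x² + Λ/3` starting strictly between
the two de Sitter equilibria `±√(Λ/3)` tends to `√(Λ/3)` as `t → +∞` and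
to `−√(Λ/3)` as `t → −∞`. -/
theorem de_sitter_attractor
    (Λ : ℝ) (hΛ : 0 < Λ)
    (x : ℝ → ℝ)
    (hx : ∀ t, HasDerivAt x (-(x t) ^ 2 + Λ/3) t)
    (h0 : |x 0| < Real.sqrt (Λ/3)) :
    Tendsto x atTop (nhds (Real.sqrt (Λ/3))) ∧
    Tendsto x atBot (nhds (-Real.sqrt (Λ/3))) := by
  set a := Real.sqrt (Λ/3) with ha_def
  have ha : 0 < a := Real.sqrt_pos.mpr (by positivity)
  have ha2 : a ^ 2 = Λ/3 := Real.sq_sqrt (by positivity)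
  have hx' : ∀ t, HasDerivAt x (a ^ 2 - (x t) ^ 2) t := by
    intro t
    have h : a ^ 2 - (x t) ^ 2 = -(x t) ^ 2 + Λ/3 := by rw [ha2]; ring
    rw [h]; exact hx t
  have hxc : Continuous x := continuous_iff_continuousAt.mpr fun t => (hx t).continuousAt
  -- Step 1: invariance of the open interval (-a, a)
  have hbnd : ∀ t, |x t| < a := by
    by_contra hcon
    push_neg at hcon
    obtain ⟨t₁, ht₁⟩ := hcon
    have hivt : a ∈ Set.uIcc (|x 0|) (|x t₁|) := by
      rw [Set.mem_uIcc]; left; exact ⟨le_of_lt h0, ht₁⟩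
    obtain ⟨s, hs, hxs⟩ :=
      intermediate_value_uIcc (f := fun t => |x t|) (hxc.abs.continuousOn) hivt
    have hxs : |x s| = a := hxs
    set c := x s with hc_def
    have hc2 : c ^ 2 = a ^ 2 := by rw [← sq_abs, hxs]
    set L := min 0 s - 1 with hL_def
    set R := max 0 s + 1 with hR_def
    have hsL : L < s := by
      have := min_le_right 0 s; simp only [hL_def]; linarith
    have hsR : s < R := by
      have := le_max_right 0 s; simp only [hR_def]; linarith
    have h0L : L ≤ 0 := by have := min_le_left 0 s; simp only [hL_def]; linarith
    have h0R : (0:ℝ) ≤ R := by have := le_max_left 0 s; simp only [hR_def]; linarith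
    obtain ⟨C, hC⟩ :=
      (isCompact_Icc (a := L) (b := R)).exists_bound_of_continuousOn hxc.continuousOn
    set M := max C a with hM_def
    have hMa : a ≤ M := le_max_right _ _
    have hM : 0 < M := lt_of_lt_of_le ha hMa
    have hMpos : 0 ≤ 2 * M := by linarith
    have hlip : ∀ t : ℝ, LipschitzOnWith ⟨2*M, hMpos⟩ (fun y => a ^ 2 - y ^ 2)
        (Set.Icc (-M) M) := by
      intro t
      apply LipschitzOnWith.of_dist_le_mul
      intro y hy z hz
      obtain ⟨hy1, hy2⟩ := hy
      obtain ⟨hz1, hz2⟩ := hz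
      rw [Real.dist_eq, Real.dist_eq]
      have h1 : (a ^ 2 - y ^ 2) - (a ^ 2 - z ^ 2) = (z + y) * (z - y) := by ring
      rw [h1, abs_mul]
      have h2 : |z + y| ≤ 2 * M := abs_le.mpr ⟨by linarith, by linarith⟩
      have h3 : |z - y| = |y - z| := abs_sub_comm z y
      calc |z + y| * |z - y| ≤ (2*M) * |z - y| :=
            mul_le_mul_of_nonneg_right h2 (abs_nonneg _)
        _ = (2*M) * |y - z| := by rw [h3]
        _ = (⟨2*M, hMpos⟩ : NNReal) * |y - z| := by norm_num
    have heq : Set.EqOn x (fun _ => c) (Set.Icc L R) := by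
      apply ODE_solution_unique_of_mem_Icc (v := fun _ y => a ^ 2 - y ^ 2)
        (s := fun _ => Set.Icc (-M) M) (fun t _ => hlip t) (t₀ := s) ⟨hsL, hsR⟩
        hxc.continuousOn (fun t _ => hx' t)
      · intro t ht
        have := hC t (Set.mem_Icc.mpr ⟨le_of_lt ht.1, le_of_lt ht.2⟩)
        rw [Real.norm_eq_abs] at this
        exact Set.mem_Icc.mpr (abs_le.mp (le_trans this (le_max_left _ _)))
      · exact continuousOn_const
      · intro t _
        have h0' : a ^ 2 - c ^ 2 = 0 := by rw [hc2]; ring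
        exact h0' ▸ hasDerivAt_const t c
      · intro t _
        have : |c| = a := hxs
        exact Set.mem_Icc.mpr (abs_le.mp (this ▸ hMa))
      · rfl
    have hx0 : x 0 = c := heq (Set.mem_Icc.mpr ⟨h0L, h0R⟩)
    rw [hx0, hxs] at h0
    exact lt_irrefl a h0
  have hpos : ∀ t, 0 < a + x t := by
    intro t; have := abs_lt.mp (hbnd t); linarith [this.1]
  have hneg : ∀ t, 0 < a - x t := by
    intro t; have := abs_lt.mp (hbnd t); linarith [this.2]
  -- Step 2: explicit form
  have key : ∃ c0 : ℝ, ∀ t,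
      Real.log (a + x t) - Real.log (a - x t) = 2*a*t + c0 := by
    refine ⟨Real.log (a + x 0) - Real.log (a - x 0), fun t => ?_⟩
    have hder : ∀ u : ℝ, HasDerivAt
        (fun t => Real.log (a + x t) - Real.log (a - x t) - 2*a*t) 0 u := by
      intro u
      have h1 : HasDerivAt (fun t => a + x t) (a ^ 2 - (x u) ^ 2) u := (hx' u).const_add a
      have h2 := h1.log (ne_of_gt (hpos u))
      have h3 : HasDerivAt (fun t => a - x t) (-(a ^ 2 - (x u) ^ 2)) u := (hx' u).const_sub a
      have h4 := h3.log (ne_of_gt (hneg u))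
      have h5 : HasDerivAt (fun t : ℝ => 2*a*t) (2*a) u := by
        simpa using (hasDerivAt_id u).const_mul (2*a)
      have hcomb := (h2.sub h4).sub h5
      have hval : (a ^ 2 - (x u) ^ 2)/(a + x u) - (-(a ^ 2 - (x u) ^ 2))/(a - x u)
          - 2*a = 0 := by
        have hp := (hpos u).ne'
        have hn := (hneg u).ne'
        field_simp
        ring
      rwa [hval] at hcomb
    have hconst := is_const_of_deriv_eq_zero
      (fun u => (hder u).differentiableAt) (fun u => (hder u).deriv) t 0
    simp only [mul_zero] at hconst
    linarith
  obtain ⟨c0, key⟩ := key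
  have hform : ∀ t, x t = a - 2*a/(Real.exp (2*a*t + c0) + 1) := by
    intro t
    have hratio : (a + x t)/(a - x t) = Real.exp (2*a*t + c0) := by
      rw [← Real.exp_log (div_pos (hpos t) (hneg t)),
        Real.log_div (hpos t).ne' (hneg t).ne', key t]
    have hE : a + x t = Real.exp (2*a*t + c0) * (a - x t) :=
      (div_eq_iff (hneg t).ne').mp hratio
    have hEpos : 0 < Real.exp (2*a*t + c0) := Real.exp_pos _
    have hden : Real.exp (2*a*t + c0) + 1 ≠ 0 := by positivity
    field_simp
    rw [mul_comm (2:ℝ) a] at hE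
    nlinarith [hE]
  have hlin : Tendsto (fun t : ℝ => 2*a*t + c0) atTop atTop :=
    tendsto_atTop_add_const_right _ c0 (tendsto_id.const_mul_atTop (by positivity))
  have hlinB : Tendsto (fun t : ℝ => 2*a*t + c0) atBot atBot :=
    tendsto_atBot_add_const_right _ c0 (tendsto_id.const_mul_atBot (by positivity))
  constructor
  · have hE : Tendsto (fun t => Real.exp (2*a*t + c0) + 1) atTop atTop :=
      (Real.tendsto_exp_atTop.comp hlin).atTop_add tendsto_const_nhds
    have h1 : Tendsto (fun t => 2*a/(Real.exp (2*a*t + c0) + 1)) atTop (𝓝 0) :=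
      Tendsto.div_atTop tendsto_const_nhds hE
    have h2 : Tendsto (fun t => a - 2*a/(Real.exp (2*a*t + c0) + 1)) atTop (𝓝 (a - 0)) :=
      tendsto_const_nhds.sub h1
    rw [sub_zero] at h2
    exact h2.congr (fun t => (hform t).symm)
  · have hE : Tendsto (fun t => Real.exp (2*a*t + c0)) atBot (𝓝 0) :=
      Real.tendsto_exp_atBot.comp hlinB
    have h1 : Tendsto (fun t => a - 2*a/(Real.exp (2*a*t + c0) + 1)) atBot
        (𝓝 (a - 2*a/(0 + 1))) :=
      tendsto_const_nhds.sub (tendsto_const_nhds.div (hE.add tendsto_const_nhds) (by norm_num))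
    have : a - 2*a/(0 + 1) = -a := by ring
    rw [this] at h1
    exact h1.congr (fun t => (hform t).symm)
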